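/- For all k ≥ 3, in the ring R: (1 − c q^k) G_{k_d} = (1 − c q^{2k}) (1 − q^k)^{−1} G_{(k−1)_d} + (a q^k + d q^k + a d q^{2k}) (1 − q^{k−1})^{−1} G_{(k−2)_d} + a d q^{2k−1} (1 − q^{k−2})^{−1} G_{(k−3)_d}, where each 1 − q^j (j ≥ 1) is invertible in R since it has constant term 1. -/

import Mathlib

open Finset PowerSeries

namespace Primc

/-- Colours: `0 = a`, `1 = b`, `2 = c`, `3 = d`. -/
abbrev Colour := Fin 4

/-- A coloured part `k_z`: an underlying integer `k` together with its colour `z`. -/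
abbrev CPart := ℕ × Colour

/-- The matrix `D` of minimal differences, with rows and columns indexed by the colours
`a, b, c, d` in this order. -/
def Dmat : Colour → Colour → ℕ := ![![2,1,2,2], ![1,0,1,1], ![0,1,0,2], ![0,1,0,2]]

/-- The position of a coloured part in the total order
`1_a < 1_b < 1_c < 1_d < 2_a < 2_b < 2_c < 2_d < ⋯`. -/
def pos (p : CPart) : ℕ := 4 * p.1 + (p.2 : ℕ)

/-- A Primc partition: a finite sequence of coloured positive integers, non-increasing in the
above total order, in which consecutive parts `λ_i, λ_{i+1}` of colours `x, y` satisfy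
`λ_i − λ_{i+1} ≥ D(x,y)`. -/
def IsPrimc (l : List CPart) : Prop :=
  (∀ p ∈ l, 1 ≤ p.1) ∧
  l.Chain' fun p r => pos r ≤ pos p ∧ r.1 + Dmat p.2 r.2 ≤ p.1

/-- The weight of a coloured partition: the sum of the underlying integers of its parts. -/
def wt (l : List CPart) : ℕ := (l.map Prod.fst).sum

/-- The number of parts of colour `z`. -/
def nc (l : List CPart) (z : Colour) : ℕ := l.countP fun p => p.2 == z

/-- `R₀ = ℤ[a,c,d]`, with `a = X 0`, `c = X 1`, `d = X 2`. -/
abbrev R0 := MvPolynomial (Fin 3) ℤ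

/-- `R = ℤ[a,c,d][[q]]`. -/
abbrev R := PowerSeries R0

/-- The variable `q`. -/
noncomputable def qq : R := PowerSeries.X

/-- The variable `a`. -/
noncomputable def av : R0 := MvPolynomial.X 0

/-- The variable `c`. -/
noncomputable def cv : R0 := MvPolynomial.X 1

/-- The variable `d`. -/
noncomputable def dv : R0 := MvPolynomial.X 2

/-- The monomial `a^{#(a-parts)} c^{#(c-parts)} d^{#(d-parts)}` attached to a coloured
partition. -/
noncomputable def mono (l : List CPart) : R0 := av ^ nc l 0 * cv ^ nc l 2 * dv ^ nc l 3

/-- The infinite product `∏_{j ≥ 0} f j`, defined coefficientwise: the coefficient of `qⁿ` is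
the corresponding coefficient of the partial product `∏_{j ≤ n} f j`.  This agrees with the
usual (coefficientwise convergent) infinite product whenever the factor `f j` is `≡ 1`
modulo `q^{j+1}`, as is the case for all products appearing here. -/
noncomputable def iprod (f : ℕ → R) : R :=
  PowerSeries.mk fun n => PowerSeries.coeff n (∏ j ∈ Finset.range (n + 1), f j)

/-- The largest part of a Primc partition (its parts being written in non-increasing order),
with the convention that the empty partition has largest part `0_b`. -/
def top (l : List CPart) : CPart := l.headD (0, 1)

/-- `G_{k_x} ∈ R`: the sum of `q^{|λ|} a^{#(a-parts)} c^{#(c-parts)} d^{#(d-parts)}` over all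
Primc partitions `λ` whose largest part is at most `k_x` in the colour order. -/
noncomputable def G (k : ℕ) (x : Colour) : R :=
  PowerSeries.mk fun n =>
    ∑ᶠ lam : {l : List CPart // IsPrimc l ∧ wt l = n ∧ pos (top l) ≤ pos (k, x)}, mono lam.1

/-- `E_{k_x} ∈ R`: the sum of `q^{|λ|} a^{#(a-parts)} c^{#(c-parts)} d^{#(d-parts)}` over all
Primc partitions `λ` whose largest part is exactly `k_x` (so `E_{0_b} = 1`, the empty
partition having largest part `0_b` by convention). -/
noncomputable def E (k : ℕ) (x : Colour) : R :=
  PowerSeries.mk fun n =>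
    ∑ᶠ lam : {l : List CPart // IsPrimc l ∧ wt l = n ∧ top l = (k, x)}, mono lam.1

-- Auxiliary development

noncomputable def var : Colour → R0 := ![av, 1, cv, dv]

def Allowed (k : ℕ) (x : Colour) (l : List CPart) : Prop :=
  pos (top l) ≤ pos (k, x) ∧ (top l).1 + Dmat x (top l).2 ≤ k

lemma nc_cons (p : CPart) (l : List CPart) (z : Colour) :
    nc (p :: l) z = nc l z + if p.2 = z then 1 else 0 := by
  simp [nc, List.countP_cons]

lemma mono_cons (k : ℕ) (x : Colour) (l : List CPart) :
    mono ((k, x) :: l) = var x * mono l := by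
  fin_cases x <;> simp [mono, var, nc_cons] <;> ring

lemma isPrimc_cons {k : ℕ} {x : Colour} {l : List CPart} (hk : 1 ≤ k) :
    IsPrimc ((k, x) :: l) ↔ IsPrimc l ∧ Allowed k x l := by
  cases l with
  | nil =>
    simp only [IsPrimc, Allowed, top, List.Chain', List.isChain_singleton, List.isChain_nil, List.mem_singleton,
      List.not_mem_nil, List.mem_cons]
    constructor
    · rintro ⟨h, -⟩
      refine ⟨⟨by simp, trivial⟩, ?_, ?_⟩
      · simp only [pos, List.headD]
        have := x.isLt; omega
      · have hD : Dmat x 1 ≤ 1 := by fin_cases x <;> decide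
        simp only [List.headD]
        omega
    · rintro -
      exact ⟨by rintro p (rfl | h) <;> simp_all, trivial⟩
  | cons p t =>
    simp only [IsPrimc, Allowed, top, List.Chain', List.isChain_cons_cons, List.mem_cons, List.headD]
    constructor
    · rintro ⟨h1, h2, h3⟩
      exact ⟨⟨fun r hr => h1 r (Or.inr hr), h3⟩, h2.1, h2.2⟩
    · rintro ⟨⟨h1, h3⟩, h2⟩
      refine ⟨?_, ⟨h2.1, h2.2⟩, h3⟩
      rintro r (rfl | hr)
      · simpa using hk
      · exact h1 r hr

lemma pos_inj {t s : CPart} (h : pos t = pos s) : t = s := by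
  obtain ⟨m, z⟩ := t; obtain ⟨n, w⟩ := s
  simp only [pos] at h
  have hz := z.isLt; have hw := w.isLt
  have : m = n ∧ (z : ℕ) = (w : ℕ) := by omega
  simp [Prod.ext_iff, this.1, Fin.ext this.2]

def PSet (P : List CPart → Prop) (n : ℕ) : Set (List CPart) :=
  {l | IsPrimc l ∧ wt l = n ∧ P l}

lemma length_le_sum (L : List ℕ) (h : ∀ x ∈ L, 1 ≤ x) : L.length ≤ L.sum := by
  induction L with
  | nil => simp
  | cons a t ih =>
    simp only [List.length_cons, List.sum_cons]
    have := h a (by simp)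
    have := ih fun x hx => h x (by simp [hx])
    omega

lemma PSet_finite (P : List CPart → Prop) (n : ℕ) : (PSet P n).Finite := by
  classical
  have hfin : {l : List (Fin (n + 1) × Colour) | l.length ≤ n}.Finite :=
    List.finite_length_le _ n
  apply (hfin.image (List.map (Prod.map Fin.val id))).subset
  rintro l ⟨⟨hpos, -⟩, hw, -⟩
  have hle : ∀ p ∈ l, p.1 ≤ n := by
    intro p hp
    have : p.1 ∈ l.map Prod.fst := List.mem_map_of_mem hp
    have := List.le_sum_of_mem this
    have hb : (List.map Prod.fst l).sum = n := hw
    omega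
  refine ⟨l.map fun p => ((⟨min p.1 n, by omega⟩ : Fin (n + 1)), p.2), ?_, ?_⟩
  · simp only [Set.mem_setOf_eq, List.length_map]
    have : l.length ≤ wt l := by
      have := length_le_sum (l.map Prod.fst) (by simpa using hpos)
      simpa [wt] using this
    omega
  · rw [List.map_map]
    conv_rhs => rw [← List.map_id l]
    apply List.map_congr_left
    intro p hp
    have := hle p hp
    simp [Prod.map, Prod.ext_iff]
    omega

noncomputable def F (P : List CPart → Prop) : R :=
  PowerSeries.mk fun n => ∑ᶠ l ∈ PSet P n, mono l

lemma G_eq_F (k : ℕ) (x : Colour) : G k x = F fun l => pos (top l) ≤ pos (k, x) := by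
  apply PowerSeries.ext; intro n
  simp only [G, F, coeff_mk]
  exact finsum_subtype_eq_finsum_cond _

lemma E_eq_F (k : ℕ) (x : Colour) : E k x = F fun l => top l = (k, x) := by
  apply PowerSeries.ext; intro n
  simp only [E, F, coeff_mk]
  exact finsum_subtype_eq_finsum_cond _

lemma F_congr {P Q : List CPart → Prop} (h : ∀ l, IsPrimc l → (P l ↔ Q l)) : F P = F Q := by
  apply PowerSeries.ext; intro n
  simp only [F, coeff_mk]
  apply finsum_mem_congr _ fun x _ => rfl
  ext l
  simp only [PSet, Set.mem_setOf_eq]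
  exact and_congr_right fun hl => and_congr_right fun _ => h l hl

lemma F_add {P Q : List CPart → Prop} (h : ∀ l, ¬(P l ∧ Q l)) :
    F (fun l => P l ∨ Q l) = F P + F Q := by
  apply PowerSeries.ext; intro n
  simp only [F, coeff_mk, map_add]
  have hset : PSet (fun l => P l ∨ Q l) n = PSet P n ∪ PSet Q n := by
    ext l; simp only [PSet, Set.mem_setOf_eq, Set.mem_union]; tauto
  rw [hset, finsum_mem_union _ (PSet_finite _ _) (PSet_finite _ _)]
  rw [Set.disjoint_left]
  rintro l ⟨-, -, hP⟩ ⟨-, -, hQ⟩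
  exact h l ⟨hP, hQ⟩

lemma top_eq_cons {k : ℕ} {x : Colour} (hk : 1 ≤ k) {l : List CPart} (h : top l = (k, x)) :
    l = (k, x) :: l.tail := by
  cases l with
  | nil => simp [top] at h; omega
  | cons p t => simp_all [top]

lemma F_cons (k : ℕ) (x : Colour) (hk : 1 ≤ k) :
    F (fun l => top l = (k, x)) = PowerSeries.C (var x) * qq ^ k * F (Allowed k x) := by
  apply PowerSeries.ext; intro n
  rw [mul_comm (PowerSeries.C (var x)) (qq ^ k), mul_assoc]
  simp only [F, qq, coeff_mk, PowerSeries.coeff_X_pow_mul']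
  split_ifs with hkn
  · -- n ≥ k : bijection by removing the head
    rw [PowerSeries.coeff_C_mul, coeff_mk]
    have hbij : ∑ᶠ l ∈ PSet (fun l => top l = (k, x)) n, mono l
        = ∑ᶠ t ∈ PSet (Allowed k x) (n - k), var x * mono t := by
      apply finsum_mem_eq_of_bijOn List.tail
      · refine ⟨?_, ?_, ?_⟩
        · rintro l ⟨hl, hw, htop⟩
          have hcons := top_eq_cons hk htop
          rw [hcons] at hl
          obtain ⟨h1, h2⟩ := (isPrimc_cons hk).1 hl
          have hwc : wt ((k, x) :: l.tail) = k + wt l.tail := by simp [wt]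
          rw [hcons] at hw; rw [hwc] at hw
          exact ⟨h1, by omega, h2⟩
        · rintro l ⟨hl, hw, htop⟩ l' ⟨hl', hw', htop'⟩ he
          rw [top_eq_cons hk htop, top_eq_cons hk htop', he]
        · rintro t ⟨ht, hw, ha⟩
          refine ⟨(k, x) :: t, ⟨(isPrimc_cons hk).2 ⟨ht, ha⟩, ?_, by simp [top]⟩, by simp⟩
          simp only [wt, List.map_cons, List.sum_cons]
          simp only [wt] at hw
          omega
      · rintro l ⟨hl, hw, htop⟩
        conv_lhs => rw [top_eq_cons hk htop]
        rw [mono_cons]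
    rw [hbij, finsum_mem_eq_finite_toFinset_sum _ (PSet_finite _ _),
      finsum_mem_eq_finite_toFinset_sum _ (PSet_finite _ _), Finset.mul_sum]
  · -- n < k : the set is empty
    have hempty : PSet (fun l => top l = (k, x)) n = ∅ := by
      ext l
      simp only [PSet, Set.mem_setOf_eq, Set.mem_empty_iff_false, iff_false, not_and]
      intro hl hw htop
      have hcons := top_eq_cons hk htop
      have hwc : wt ((k, x) :: l.tail) = k + wt l.tail := by simp [wt]
      rw [hcons, hwc] at hw
      omega
    rw [hempty, finsum_mem_empty]

lemma cvagl0 : ((0 : Colour) : ℕ) = 0 := rfl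
lemma cvagl1 : ((1 : Colour) : ℕ) = 1 := rfl
lemma cvagl2 : ((2 : Colour) : ℕ) = 2 := rfl
lemma cvagl3 : ((3 : Colour) : ℕ) = 3 := rfl

lemma pos_succ_iff {a b : CPart} (h : pos a + 1 = pos b) (t : CPart) :
    pos t ≤ pos b ↔ (pos t ≤ pos a ∨ t = b) := by
  constructor
  · intro hle
    rcases eq_or_lt_of_le hle with he | hlt
    · exact Or.inr (pos_inj he)
    · left; omega
  · rintro (h1 | rfl)
    · omega
    · exact le_refl _

lemma split3 (k : ℕ) : G k 3 = G k 2 + E k 3 := by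
  rw [G_eq_F, G_eq_F, E_eq_F, ← F_add ?_]
  · exact F_congr fun l _ => pos_succ_iff (by simp [pos, cvagl0, cvagl1, cvagl2, cvagl3]) (top l)
  · rintro l ⟨h1, h2⟩
    rw [h2] at h1; simp [pos, cvagl0, cvagl1, cvagl2, cvagl3] at h1; try omega

lemma split2 (k : ℕ) : G k 2 = G k 1 + E k 2 := by
  rw [G_eq_F, G_eq_F, E_eq_F, ← F_add ?_]
  · exact F_congr fun l _ => pos_succ_iff (by simp [pos, cvagl0, cvagl1, cvagl2, cvagl3]) (top l)
  · rintro l ⟨h1, h2⟩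
    rw [h2] at h1; simp [pos, cvagl0, cvagl1, cvagl2, cvagl3] at h1; try omega

lemma split1 (k : ℕ) : G k 1 = G k 0 + E k 1 := by
  rw [G_eq_F, G_eq_F, E_eq_F, ← F_add ?_]
  · exact F_congr fun l _ => pos_succ_iff (by simp [pos, cvagl0, cvagl1, cvagl2, cvagl3]) (top l)
  · rintro l ⟨h1, h2⟩
    rw [h2] at h1; simp [pos, cvagl0, cvagl1, cvagl2, cvagl3] at h1; try omega

lemma split0 (k : ℕ) (hk : 1 ≤ k) : G k 0 = G (k - 1) 3 + E k 0 := by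
  rw [G_eq_F, G_eq_F, E_eq_F, ← F_add ?_]
  · refine F_congr fun l _ => pos_succ_iff ?_ (top l)
    simp [pos]; omega
  · rintro l ⟨h1, h2⟩
    rw [h2] at h1; simp [pos] at h1; omega

lemma row1_iff (k : ℕ) (hk : 1 ≤ k) (t : CPart) :
    pos t ≤ pos (k, 1) ↔ ((pos t ≤ pos (k, 1) ∧ t.1 + Dmat 1 t.2 ≤ k) ∨ t = (k, 0)) := by
  obtain ⟨m, z⟩ := t
  fin_cases z <;> simp [pos, Dmat, Prod.ext_iff, Fin.ext_iff, Matrix.cons_val_zero, Matrix.cons_val_one, Matrix.head_cons, Matrix.vecHead, Matrix.vecTail, Function.comp, cvagl0, cvagl1, cvagl2, cvagl3] <;> omega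

lemma row0_iff (k : ℕ) (hk : 2 ≤ k) (t : CPart) :
    pos t ≤ pos (k - 1, 1) ↔ ((pos t ≤ pos (k, 0) ∧ t.1 + Dmat 0 t.2 ≤ k) ∨ t = (k - 1, 0)) := by
  obtain ⟨m, z⟩ := t
  fin_cases z <;> simp [pos, Dmat, Prod.ext_iff, Fin.ext_iff, Matrix.cons_val_zero, Matrix.cons_val_one, Matrix.head_cons, Matrix.vecHead, Matrix.vecTail, Function.comp, cvagl0, cvagl1, cvagl2, cvagl3] <;> omega

lemma row3_iff (k : ℕ) (hk : 2 ≤ k) (t : CPart) :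
    pos t ≤ pos (k, 2) ↔
      ((pos t ≤ pos (k, 3) ∧ t.1 + Dmat 3 t.2 ≤ k) ∨ (t = (k, 1) ∨ t = (k - 1, 3))) := by
  obtain ⟨m, z⟩ := t
  fin_cases z <;> simp [pos, Dmat, Prod.ext_iff, Fin.ext_iff, Matrix.cons_val_zero, Matrix.cons_val_one, Matrix.head_cons, Matrix.vecHead, Matrix.vecTail, Function.comp, cvagl0, cvagl1, cvagl2, cvagl3] <;> omega

lemma row2_iff (k : ℕ) (hk : 2 ≤ k) (t : CPart) :
    pos t ≤ pos (k, 2) ↔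
      ((pos t ≤ pos (k, 2) ∧ t.1 + Dmat 2 t.2 ≤ k) ∨ (t = (k, 1) ∨ t = (k - 1, 3))) := by
  obtain ⟨m, z⟩ := t
  fin_cases z <;> simp [pos, Dmat, Prod.ext_iff, Fin.ext_iff, Matrix.cons_val_zero, Matrix.cons_val_one, Matrix.head_cons, Matrix.vecHead, Matrix.vecTail, Function.comp, cvagl0, cvagl1, cvagl2, cvagl3] <;> omega

lemma rowA1 (k : ℕ) (hk : 1 ≤ k) : G k 1 = F (Allowed k 1) + E k 0 := by
  rw [G_eq_F, E_eq_F, ← F_add ?_]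
  · exact F_congr fun l _ => row1_iff k hk (top l)
  · rintro l ⟨⟨-, h2⟩, htop⟩
    rw [htop] at h2; simp [Dmat, Matrix.cons_val_zero, Matrix.cons_val_one, Matrix.head_cons, Matrix.vecHead, Matrix.vecTail, Function.comp] at h2; try omega

lemma rowA0 (k : ℕ) (hk : 2 ≤ k) : G (k - 1) 1 = F (Allowed k 0) + E (k - 1) 0 := by
  rw [G_eq_F, E_eq_F, ← F_add ?_]
  · exact F_congr fun l _ => row0_iff k hk (top l)
  · rintro l ⟨⟨-, h2⟩, htop⟩
    rw [htop] at h2; simp [Dmat, Matrix.cons_val_zero, Matrix.cons_val_one, Matrix.head_cons, Matrix.vecHead, Matrix.vecTail, Function.comp] at h2; try omega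

lemma rowA3 (k : ℕ) (hk : 2 ≤ k) : G k 2 = F (Allowed k 3) + (E k 1 + E (k - 1) 3) := by
  rw [G_eq_F, E_eq_F, E_eq_F, ← F_add ?_, ← F_add ?_]
  · exact F_congr fun l _ => row3_iff k hk (top l)
  · rintro l ⟨⟨-, h2⟩, htop | htop⟩ <;> rw [htop] at h2 <;> simp [Dmat, Matrix.cons_val_zero, Matrix.cons_val_one, Matrix.head_cons, Matrix.vecHead, Matrix.vecTail, Function.comp] at h2 <;> omega
  · rintro l ⟨h1, h2⟩
    rw [h1] at h2; simp [Prod.ext_iff, Fin.ext_iff] at h2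

lemma rowA2 (k : ℕ) (hk : 2 ≤ k) : G k 2 = F (Allowed k 2) + (E k 1 + E (k - 1) 3) := by
  rw [G_eq_F, E_eq_F, E_eq_F, ← F_add ?_, ← F_add ?_]
  · exact F_congr fun l _ => row2_iff k hk (top l)
  · rintro l ⟨⟨-, h2⟩, htop | htop⟩ <;> rw [htop] at h2 <;> simp [Dmat, Matrix.cons_val_zero, Matrix.cons_val_one, Matrix.head_cons, Matrix.vecHead, Matrix.vecTail, Function.comp] at h2 <;> omega
  · rintro l ⟨h1, h2⟩
    rw [h1] at h2; simp [Prod.ext_iff, Fin.ext_iff] at h2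

lemma var1 : var 1 = 1 := rfl
lemma var0 : var 0 = av := rfl
lemma var2 : var 2 = cv := rfl
lemma var3 : var 3 = dv := rfl

lemma Erel (k : ℕ) (x : Colour) (hk : 1 ≤ k) :
    E k x = PowerSeries.C (var x) * qq ^ k * F (Allowed k x) := by
  rw [E_eq_F, F_cons k x hk]

lemma Ei (k : ℕ) (hk : 1 ≤ k) :
    (1 - qq ^ k) * E k 1 = qq ^ k * G (k - 1) 3 := by
  have r1 : E k 1 = qq ^ k * F (Allowed k 1) := by
    rw [Erel k 1 hk, var1, map_one, one_mul]
  have r2 := rowA1 k hk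
  have r3 := split1 k
  have r4 := split0 k hk
  linear_combination r1 - qq ^ k * r2 + qq ^ k * r3 + qq ^ k * r4

lemma Ei0 (k : ℕ) (hk : 2 ≤ k) :
    (1 - qq ^ (k - 1)) * E k 0 = PowerSeries.C av * qq ^ k * G (k - 2) 3 := by
  have s1 : E k 0 = PowerSeries.C av * qq ^ k * F (Allowed k 0) := by
    rw [Erel k 0 (by omega), var0]
  have s2 := rowA0 k hk
  have s3 := split1 (k - 1)
  have s4 : G (k - 1) 0 = G (k - 2) 3 + E (k - 1) 0 := by
    have := split0 (k - 1) (by omega)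
    have he : k - 1 - 1 = k - 2 := by omega
    rwa [he] at this
  have s5 : (1 - qq ^ (k - 1)) * E (k - 1) 1 = qq ^ (k - 1) * G (k - 2) 3 := by
    have := Ei (k - 1) (by omega)
    have he : k - 1 - 1 = k - 2 := by omega
    rwa [he] at this
  set Q' := qq ^ (k - 1)
  set Q := qq ^ k
  set A := PowerSeries.C av
  linear_combination (1 - Q') * s1 - (1 - Q') * A * Q * s2 + (1 - Q') * A * Q * s3 +
    (1 - Q') * A * Q * s4 + A * Q * s5

lemma Hrel (k : ℕ) (hk : 2 ≤ k) :
    (1 - PowerSeries.C cv * qq ^ k) * F (Allowed k 3) =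
      G (k - 1) 3 + E k 0 - E (k - 1) 3 := by
  have a1 := rowA3 k hk
  have a2 := rowA2 k hk
  have a3 := split2 k
  have a4 : E k 2 = PowerSeries.C cv * qq ^ k * F (Allowed k 2) := by
    rw [Erel k 2 (by omega), var2]
  have a5 := split1 k
  have a6 := split0 k (by omega)
  set Q := qq ^ k
  set Cc := PowerSeries.C cv
  linear_combination (Cc * Q - 1) * a1 - Cc * Q * a2 + a3 + a4 + a5 + a6

lemma unit_one_sub_pow (j : ℕ) (hj : 1 ≤ j) :
    (1 - (qq : R) ^ j) * Ring.inverse (1 - qq ^ j) = 1 := by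
  apply Ring.mul_inverse_cancel
  rw [PowerSeries.isUnit_iff_constantCoeff]
  simp only [map_sub, map_one, map_pow, qq, PowerSeries.constantCoeff_X]
  rw [zero_pow (by omega), sub_zero]
  exact isUnit_one

/-- Proposition 2.2: for all `k ≥ 3`, in `R`,
`(1 − c q^k) G_{k_d} = (1 − c q^{2k})(1 − q^k)⁻¹ G_{(k−1)_d}
  + (a q^k + d q^k + a d q^{2k})(1 − q^{k−1})⁻¹ G_{(k−2)_d}
  + a d q^{2k−1} (1 − q^{k−2})⁻¹ G_{(k−3)_d}`,
where the inverses (via `Ring.inverse`) exist since each `1 − q^j` (`j ≥ 1`) has constant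
term `1` and hence is invertible in `R`. -/
theorem statement13 (k : ℕ) (hk : 3 ≤ k) :
    (1 - PowerSeries.C cv * qq ^ k) * G k 3 =
      (1 - PowerSeries.C cv * qq ^ (2 * k)) * Ring.inverse (1 - qq ^ k) * G (k - 1) 3 +
      (PowerSeries.C av * qq ^ k + PowerSeries.C dv * qq ^ k +
          PowerSeries.C av * PowerSeries.C dv * qq ^ (2 * k)) *
        Ring.inverse (1 - qq ^ (k - 1)) * G (k - 2) 3 +
      PowerSeries.C av * PowerSeries.C dv * qq ^ (2 * k - 1) *
        Ring.inverse (1 - qq ^ (k - 2)) * G (k - 3) 3 := by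
  obtain ⟨m, rfl⟩ : ∃ m, k = m + 3 := ⟨k - 3, by omega⟩
  -- abbreviations
  set A := PowerSeries.C av with hA
  set Cc := PowerSeries.C cv with hCc
  set Dd := PowerSeries.C dv with hDd
  have h1 : (1 - qq ^ (m + 3)) * E (m + 3) 1 = qq ^ (m + 3) * G (m + 2) 3 :=
    Ei (m + 3) (by omega)
  have h2 : (1 - qq ^ (m + 2)) * E (m + 3) 0 = A * qq ^ (m + 3) * G (m + 1) 3 :=
    Ei0 (m + 3) (by omega)
  have h3 : (1 - qq ^ (m + 2)) * E (m + 2) 1 = qq ^ (m + 2) * G (m + 1) 3 :=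
    Ei (m + 2) (by omega)
  have h4 : (1 - qq ^ (m + 1)) * E (m + 2) 0 = A * qq ^ (m + 2) * G m 3 :=
    Ei0 (m + 2) (by omega)
  have h5 : (1 - Cc * qq ^ (m + 3)) * F (Allowed (m + 3) 3) =
      G (m + 2) 3 + E (m + 3) 0 - E (m + 2) 3 := Hrel (m + 3) (by omega)
  have h5b : E (m + 2) 3 = Dd * qq ^ (m + 2) * F (Allowed (m + 2) 3) := by
    rw [Erel (m + 2) 3 (by omega), var3]
  have hFA : F (Allowed (m + 3) 2) = F (Allowed (m + 3) 3) := by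
    have ha2 : G (m + 3) 2 = F (Allowed (m + 3) 2) + (E (m + 3) 1 + E (m + 2) 3) :=
      rowA2 (m + 3) (by omega)
    have ha3 : G (m + 3) 2 = F (Allowed (m + 3) 3) + (E (m + 3) 1 + E (m + 2) 3) :=
      rowA3 (m + 3) (by omega)
    linear_combination ha3 - ha2
  have h6 : G (m + 3) 3 = G (m + 2) 3 + E (m + 3) 0 + E (m + 3) 1 +
      (Cc + Dd) * qq ^ (m + 3) * F (Allowed (m + 3) 3) := by
    have b1 := split3 (m + 3)
    have b2 := split2 (m + 3)
    have b3 := split1 (m + 3)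
    have b4 : G (m + 3) 0 = G (m + 2) 3 + E (m + 3) 0 := split0 (m + 3) (by omega)
    have b5 : E (m + 3) 3 = Dd * qq ^ (m + 3) * F (Allowed (m + 3) 3) := by
      rw [Erel (m + 3) 3 (by omega), var3]
    have b6 : E (m + 3) 2 = Cc * qq ^ (m + 3) * F (Allowed (m + 3) 3) := by
      rw [Erel (m + 3) 2 (by omega), var2, hFA]
    linear_combination b1 + b2 + b3 + b4 + b5 + b6
  have h7 : G (m + 2) 3 = G (m + 1) 3 + E (m + 2) 0 + E (m + 2) 1 +
      (Cc + Dd) * qq ^ (m + 2) * F (Allowed (m + 2) 3) := by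
    have hFA' : F (Allowed (m + 2) 2) = F (Allowed (m + 2) 3) := by
      have ha2 : G (m + 2) 2 = F (Allowed (m + 2) 2) + (E (m + 2) 1 + E (m + 1) 3) :=
        rowA2 (m + 2) (by omega)
      have ha3 : G (m + 2) 2 = F (Allowed (m + 2) 3) + (E (m + 2) 1 + E (m + 1) 3) :=
        rowA3 (m + 2) (by omega)
      linear_combination ha3 - ha2
    have b1 := split3 (m + 2)
    have b2 := split2 (m + 2)
    have b3 := split1 (m + 2)
    have b4 : G (m + 2) 0 = G (m + 1) 3 + E (m + 2) 0 := split0 (m + 2) (by omega)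
    have b5 : E (m + 2) 3 = Dd * qq ^ (m + 2) * F (Allowed (m + 2) 3) := h5b
    have b6 : E (m + 2) 2 = Cc * qq ^ (m + 2) * F (Allowed (m + 2) 3) := by
      rw [Erel (m + 2) 2 (by omega), var2, hFA']
    linear_combination b1 + b2 + b3 + b4 + b5 + b6
  have u1 : (1 - qq ^ (m + 3)) * Ring.inverse (1 - qq ^ (m + 3)) = 1 :=
    unit_one_sub_pow (m + 3) (by omega)
  have u2 : (1 - qq ^ (m + 2)) * Ring.inverse (1 - qq ^ (m + 2)) = 1 :=
    unit_one_sub_pow (m + 2) (by omega)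
  have u3 : (1 - qq ^ (m + 1)) * Ring.inverse (1 - qq ^ (m + 1)) = 1 :=
    unit_one_sub_pow (m + 1) (by omega)
  have h5' : (1 - Cc * qq ^ (m + 3)) * F (Allowed (m + 3) 3) =
      G (m + 2) 3 + E (m + 3) 0 - Dd * qq ^ (m + 2) * F (Allowed (m + 2) 3) := by
    rw [h5, h5b]
  show (1 - Cc * qq ^ (m + 3)) * G (m + 3) 3 =
      (1 - Cc * qq ^ (2 * m + 6)) * Ring.inverse (1 - qq ^ (m + 3)) * G (m + 2) 3 +
      (A * qq ^ (m + 3) + Dd * qq ^ (m + 3) + A * Dd * qq ^ (2 * m + 6)) *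
        Ring.inverse (1 - qq ^ (m + 2)) * G (m + 1) 3 +
      A * Dd * qq ^ (2 * m + 5) * Ring.inverse (1 - qq ^ (m + 1)) * G m 3
  set I1 := Ring.inverse (1 - qq ^ (m + 3))
  set I2 := Ring.inverse (1 - qq ^ (m + 2))
  set I3 := Ring.inverse (1 - qq ^ (m + 1))
  set Q1 := (qq : R) ^ (m + 3) with hQ1
  set Q2 := (qq : R) ^ (m + 2) with hQ2
  set Q3 := (qq : R) ^ (m + 1) with hQ3
  have e26 : (qq : R) ^ (2 * m + 6) = Q1 * Q1 := by rw [hQ1, ← pow_add]; ring_nf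
  have e25 : (qq : R) ^ (2 * m + 5) = Q1 * Q2 := by rw [hQ1, hQ2, ← pow_add]; ring_nf
  rw [e26, e25]
  linear_combination (1 - Cc * Q1) * h6 + (Cc + Dd) * Q1 * h5' + Dd * Q1 * h7 +
    (1 - Cc * Q1) * I1 * h1 + (1 + Dd * Q1) * I2 * h2 + Dd * Q1 * I2 * h3 + Dd * Q1 * I3 * h4 -
    ((1 - Cc * Q1) * E (m + 3) 1 + G (m + 2) 3) * u1 -
    ((1 + Dd * Q1) * E (m + 3) 0 + Dd * Q1 * E (m + 2) 1 + Dd * Q1 * G (m + 1) 3) * u2 -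
    Dd * Q1 * E (m + 2) 0 * u3


end Primc
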